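/- arXiv:2602.12371 — 2 statements merged into one kernel-verified Lean document; each statement's English description precedes it below -/
import Mathlib

section
/- Let k ≥ 2 be a fixed integer. For every prime p, the local Euler factor of g_k satisfies 1 + ∑_{m ≥ 2} g_k(p^m)/p^m = (1 - 1/p)·(1 - 1/k + (1/k)(1 - 1/p)^{-k}), the series on the left being absolutely convergent. -/
open Finset ArithmeticFunction Filter Asymptotics

/-- The Piltz divisor function `d_k(n)`: the number of ways of writing `n`
as an ordered product of `k` positive integers (the `k`-fold Dirichlet
convolution of the constant-one function). -/
noncomputable def piltz (k n : ℕ) : ℕ := (ArithmeticFunction.zeta ^ k : ArithmeticFunction ℕ) n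

/-- `D_k(n) = d_k(n) / k^{ω(n)}`. -/
noncomputable def Dk (k n : ℕ) : ℝ := (piltz k n : ℝ) / (k : ℝ) ^ n.primeFactors.card

/-- `n` is 2-full: every prime dividing `n` divides it at least twice. -/
def TwoFull (n : ℕ) : Prop := ∀ p ∈ n.primeFactors, p ^ 2 ∣ n

instance : DecidablePred TwoFull := fun n =>
  inferInstanceAs (Decidable (∀ p ∈ n.primeFactors, p ^ 2 ∣ n))

/-- The characteristic function of 2-full integers. -/
noncomputable def s2 (n : ℕ) : ℝ := if TwoFull n then 1 else 0

/-- `g_k(n) = ((k-1)/k) · s₂(n) · D_{k-1}(n)`. -/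
noncomputable def gk (k n : ℕ) : ℝ := ((k : ℝ) - 1) / k * s2 n * Dk (k - 1) n

/-- The Euler product constant `A_k`. -/
noncomputable def Ak (k : ℕ) : ℝ :=
  ∏' p : Nat.Primes,
    (1 - 1 / ((p : ℕ) : ℝ)) * (1 - 1 / k + (1 / k : ℝ) * ((1 - 1 / ((p : ℕ) : ℝ)) ^ k)⁻¹)

/-- `G_k(q) = A_k · ∏_{p ∣ q} k / (k - 1 + (1 - 1/p)^{-k})`. -/
noncomputable def Gk (k q : ℕ) : ℝ :=
  Ak k * ∏ p ∈ q.primeFactors, (k : ℝ) / ((k : ℝ) - 1 + ((1 - 1 / (p : ℝ)) ^ k)⁻¹)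

lemma zeta_pow_apply_prime_pow (j : ℕ) {p : ℕ} (hp : p.Prime) (n : ℕ) :
    (ArithmeticFunction.zeta ^ (j + 1) : ArithmeticFunction ℕ) (p ^ n) = (n + j).choose j := by
  induction j generalizing n with
  | zero =>
    simp [pow_one, zeta_apply, pow_eq_zero_iff, hp.ne_zero]
  | succ j ih =>
    rw [pow_succ, mul_zeta_apply, Nat.sum_divisors_prime_pow hp]
    simp only [ih]
    rw [Nat.sum_range_add_choose, add_assoc]

/-- For `k ≥ 2` and a prime `p`, the local Euler factor of `g_k`:
`1 + ∑_{m ≥ 2} g_k(p^m)/p^m = (1-1/p)·(1 - 1/k + (1/k)(1-1/p)^{-k})`,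
the series converging absolutely. -/
theorem stmt_5 (k : ℕ) (hk : 2 ≤ k) (p : ℕ) (hp : p.Prime) :
    Summable (fun m : ℕ => |gk k (p ^ (m + 2)) / (p : ℝ) ^ (m + 2)|) ∧
    1 + ∑' m : ℕ, gk k (p ^ (m + 2)) / (p : ℝ) ^ (m + 2) =
      (1 - 1 / (p : ℝ)) * (1 - 1 / k + (1 / k : ℝ) * ((1 - 1 / (p : ℝ)) ^ k)⁻¹) := by
  obtain ⟨j, rfl⟩ : ∃ j, k = j + 2 := ⟨k - 2, by omega⟩
  have hp2 : (2 : ℝ) ≤ (p : ℝ) := by exact_mod_cast hp.two_le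
  set x : ℝ := 1 / (p : ℝ) with hxdef
  have hx0 : 0 ≤ x := by positivity
  have hx1 : x < 1 := by
    rw [hxdef, div_lt_one (by linarith)]; linarith
  have hxnorm : ‖x‖ < 1 := by rwa [Real.norm_eq_abs, abs_of_nonneg hx0]
  have h1x : (1 : ℝ) - x ≠ 0 := by linarith
  -- value of the general term
  have hterm : ∀ m : ℕ, gk (j + 2) (p ^ (m + 2)) / (p : ℝ) ^ (m + 2) =
      ((m + 2 + j).choose j : ℝ) * x ^ (m + 2) / (j + 2) := by
    intro m
    have htf : TwoFull (p ^ (m + 2)) := by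
      intro q hq
      obtain ⟨hq1, hq2, -⟩ := Nat.mem_primeFactors.1 hq
      have : q = p := (Nat.prime_dvd_prime_iff_eq hq1 hp).1 (hq1.dvd_of_dvd_pow hq2)
      subst this
      exact pow_dvd_pow q (by omega)
    have hpf : (p ^ (m + 2)).primeFactors = {p} :=
      Nat.primeFactors_prime_pow (by omega) hp
    have hpiltz : piltz (j + 2 - 1) (p ^ (m + 2)) = (m + 2 + j).choose j := by
      show (ArithmeticFunction.zeta ^ (j + 1) : ArithmeticFunction ℕ) (p ^ (m + 2)) = _
      exact zeta_pow_apply_prime_pow j hp (m + 2)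
    rw [gk, s2, if_pos htf, Dk, hpiltz, hpf, Finset.card_singleton, pow_one]
    have hj1 : ((j + 2 - 1 : ℕ) : ℝ) = (j : ℝ) + 1 := by push_cast [Nat.add_sub_cancel]; ring
    rw [hj1]
    have hpne : (p : ℝ) ≠ 0 := by linarith
    have hj1ne : (j : ℝ) + 1 ≠ 0 := by positivity
    rw [hxdef]
    push_cast
    rw [div_pow, one_pow]
    field_simp
    ring
  -- the binomial series
  have h0 : HasSum (fun n : ℕ => ((n + j).choose j : ℝ) * x ^ n)
      (1 / (1 - x) ^ (j + 1)) := hasSum_choose_mul_geometric_of_norm_lt_one j hxnorm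
  have h2 : HasSum (fun m : ℕ => ((m + 2 + j).choose j : ℝ) * x ^ (m + 2))
      (1 / (1 - x) ^ (j + 1) -
        ∑ i ∈ Finset.range 2, ((i + j).choose j : ℝ) * x ^ i) :=
    (hasSum_nat_add_iff' 2).2 h0
  have hrange : ∑ i ∈ Finset.range 2, ((i + j).choose j : ℝ) * x ^ i
      = 1 + ((j : ℝ) + 1) * x := by
    rw [Finset.sum_range_succ, Finset.sum_range_one]
    have : (1 + j).choose j = j + 1 := by
      rw [add_comm]; exact Nat.choose_succ_self_right j
    simp [this]
  rw [hrange] at h2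
  have h3 : HasSum (fun m : ℕ => ((m + 2 + j).choose j : ℝ) * x ^ (m + 2) / (j + 2))
      ((1 / (1 - x) ^ (j + 1) - (1 + ((j : ℝ) + 1) * x)) / (j + 2)) := h2.div_const _
  have h3' : HasSum (fun m : ℕ => gk (j + 2) (p ^ (m + 2)) / (p : ℝ) ^ (m + 2))
      ((1 / (1 - x) ^ (j + 1) - (1 + ((j : ℝ) + 1) * x)) / (j + 2)) := by
    exact h3.congr_fun hterm
  constructor
  · have : (fun m : ℕ => |gk (j + 2) (p ^ (m + 2)) / (p : ℝ) ^ (m + 2)|) =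
        fun m : ℕ => gk (j + 2) (p ^ (m + 2)) / (p : ℝ) ^ (m + 2) := by
      funext m
      rw [abs_of_nonneg]
      rw [hterm m]
      positivity
    rw [this]
    exact h3'.summable
  · rw [h3'.tsum_eq]
    push_cast
    have hrw : (1 - x) * (1 - 1 / ((j : ℝ) + 2) + 1 / ((j : ℝ) + 2) * ((1 - x) ^ (j + 2))⁻¹)
        = (1 - x) * (1 - 1 / ((j : ℝ) + 2)) + (1 / (1 - x) ^ (j + 1)) / ((j : ℝ) + 2) := by
      rw [pow_succ, mul_inv]
      field_simp
    rw [hrw]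
    generalize (1 / (1 - x) ^ (j + 1) : ℝ) = S
    have hj2 : ((j : ℝ) + 2) ≠ 0 := by positivity
    field_simp
    ring
end

section
/- Let k ≥ 2 be a fixed integer and q ≥ 1 an integer. There is a constant C depending only on k such that for all x ≥ 2, ∑_{n ≤ x, (n,q)=1} |g_k(n)| ≤ C·x^{1/2}·(log x)^{k-2}. -/
open Finset ArithmeticFunction Filter Asymptotics

lemma piltz_mult (k : ℕ) : (ArithmeticFunction.zeta ^ k : ArithmeticFunction ℕ).IsMultiplicative := by
  induction k with
  | zero => simpa using ArithmeticFunction.isMultiplicative_one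
  | succ n ih => rw [pow_succ]; exact ih.mul isMultiplicative_zeta

lemma piltz_one (k : ℕ) : piltz k 1 = 1 := (piltz_mult k).1

lemma piltz_succ_prime_pow (j e p : ℕ) (hp : p.Prime) :
    piltz (j+1) (p ^ e) = ∑ i ∈ range (e+1), piltz j (p ^ i) := by
  unfold piltz
  rw [pow_succ, mul_comm, ArithmeticFunction.zeta_mul_apply,
    Nat.sum_divisors_prime_pow hp]


lemma piltz_zero_prime_pow (i p : ℕ) (hp : p.Prime) :
    piltz 0 (p ^ i) = if i = 0 then 1 else 0 := by
  rcases eq_or_ne i 0 with h | h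
  · subst h; simp [piltz]
  · have h1 : 1 < p ^ i := Nat.one_lt_pow h hp.one_lt
    simp [piltz, ArithmeticFunction.one_apply, h1.ne', h, hp.one_lt.ne']

lemma piltz_one_apply (n : ℕ) (hn : n ≠ 0) : piltz 1 n = 1 := by
  simp [piltz, pow_one, ArithmeticFunction.zeta_apply, hn]

lemma piltz_prime (j p : ℕ) (hp : p.Prime) : piltz (j+1) p = j + 1 := by
  induction j with
  | zero => rw [piltz_one_apply p hp.ne_zero]
  | succ n ih =>
    have h := piltz_succ_prime_pow (n+1) 1 p hp
    rw [Finset.sum_range_succ, Finset.sum_range_one, pow_zero, piltz_one, pow_one, ih] at h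
    omega

lemma piltz_prime_sq (j p : ℕ) (hp : p.Prime) :
    2 * piltz (j+1) (p^2) = (j+1) * (j+2) := by
  induction j with
  | zero => rw [piltz_one_apply (p^2) (pow_ne_zero 2 hp.ne_zero)]
  | succ n ih =>
    have h := piltz_succ_prime_pow (n+1) 2 p hp
    rw [Finset.sum_range_succ, Finset.sum_range_succ, Finset.sum_range_one, pow_zero,
      piltz_one, pow_one, piltz_prime n p hp] at h
    rw [h]
    nlinarith [ih]

lemma piltz_prime_pow_le (j e p : ℕ) (hp : p.Prime) :
    piltz (j+1) (p^e) ≤ (e+1)^j := by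
  induction j generalizing e with
  | zero =>
    rw [piltz_succ_prime_pow 0 e p hp]
    calc ∑ i ∈ range (e+1), piltz 0 (p^i) = ∑ i ∈ range (e+1), if i = 0 then 1 else 0 :=
          Finset.sum_congr rfl fun i _ => piltz_zero_prime_pow i p hp
      _ ≤ 1 := by simp
  | succ n ih =>
    rw [piltz_succ_prime_pow (n+1) e p hp, pow_succ, mul_comm ((e+1)^n) (e+1)]
    calc ∑ i ∈ range (e+1), piltz (n+1) (p^i) ≤ ∑ i ∈ range (e+1), (e+1)^n := by
          apply Finset.sum_le_sum
          intro i hi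
          exact (ih i).trans (Nat.pow_le_pow_left (by have := Finset.mem_range.1 hi; omega) n)
      _ = (e+1) * (e+1)^n := by rw [Finset.sum_const, card_range, smul_eq_mul]

lemma piltz_succ_eq_sum (j n : ℕ) : piltz (j+1) n = ∑ b ∈ n.divisors, piltz j b := by
  unfold piltz
  rw [pow_succ, ArithmeticFunction.mul_zeta_apply]

lemma sum_divisors_swap (N : ℕ) (F : ℕ → ℝ) :
    ∑ n ∈ Icc 1 N, ∑ b ∈ n.divisors, F b = ∑ a ∈ Icc 1 N, ∑ b ∈ Icc 1 (N / a), F b := by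
  rw [Finset.sum_sigma' (Icc 1 N) (fun n => n.divisors) (fun _ b => F b),
      Finset.sum_sigma' (Icc 1 N) (fun a => Icc 1 (N / a)) (fun _ b => F b)]
  refine Finset.sum_nbij' (fun x => ⟨x.1 / x.2, x.2⟩) (fun y => ⟨y.1 * y.2, y.2⟩) ?_ ?_ ?_ ?_ ?_
  · rintro ⟨n, b⟩ h
    simp only [Finset.mem_sigma, Finset.mem_Icc, Nat.mem_divisors] at h ⊢
    obtain ⟨⟨hn1, hnN⟩, hbn, hn0⟩ := h
    have hb0 : 0 < b := Nat.pos_of_dvd_of_pos hbn (by omega)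
    have hbn' : b ≤ n := Nat.le_of_dvd (by omega) hbn
    refine ⟨⟨Nat.one_le_div_iff hb0 |>.2 hbn', (Nat.div_le_self n b).trans hnN⟩, hb0, ?_⟩
    rw [Nat.le_div_iff_mul_le (Nat.one_le_div_iff hb0 |>.2 hbn')]
    calc b * (n / b) = n := Nat.mul_div_cancel' hbn
      _ ≤ N := hnN
  · rintro ⟨a, b⟩ h
    simp only [Finset.mem_sigma, Finset.mem_Icc, Nat.mem_divisors] at h ⊢
    obtain ⟨⟨ha1, haN⟩, hb1, hbNa⟩ := h
    have h2 : b * a ≤ N := (Nat.le_div_iff_mul_le (by omega)).1 hbNa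
    have : a * b ≤ N := by rw [mul_comm]; exact h2
    exact ⟨⟨Nat.one_le_iff_ne_zero.2 (by positivity), this⟩, dvd_mul_left b a, by positivity⟩
  · rintro ⟨n, b⟩ h
    simp only [Finset.mem_sigma, Nat.mem_divisors] at h
    have := Nat.div_mul_cancel h.2.1
    simp [this]
  · rintro ⟨a, b⟩ h
    simp only [Finset.mem_sigma, Finset.mem_Icc] at h
    have hb : 0 < b := by omega
    simp [Nat.mul_div_cancel_left _ hb, Nat.mul_div_cancel _ hb]
  · intros; rfl

lemma harmonic_bound (N : ℕ) : ∑ a ∈ Icc 1 N, (a : ℝ)⁻¹ ≤ 1 + Real.log N := by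
  have h := harmonic_le_one_add_log N
  rw [harmonic_eq_sum_Icc] at h
  push_cast at h
  exact h

lemma piltz_mean_value (j : ℕ) : ∀ y : ℝ, 1 ≤ y →
    ∑ n ∈ Icc 1 ⌊y⌋₊, (piltz (j+1) n : ℝ) ≤ y * (1 + Real.log y) ^ j := by
  induction j with
  | zero =>
    intro y hy
    have : ∀ n ∈ Icc 1 ⌊y⌋₊, (piltz 1 n : ℝ) = 1 := by
      intro n hn
      rw [piltz_one_apply n (by simp only [Finset.mem_Icc] at hn; omega)]
      norm_num
    rw [Finset.sum_congr rfl this, Finset.sum_const, Nat.card_Icc, nsmul_eq_mul, mul_one,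
      pow_zero, mul_one]
    calc ((⌊y⌋₊ + 1 - 1 : ℕ) : ℝ) = (⌊y⌋₊ : ℝ) := by norm_num
      _ ≤ y := Nat.floor_le (by linarith)
  | succ m ih =>
    intro y hy
    have hy0 : 0 < y := by linarith
    have hfl : 1 ≤ ⌊y⌋₊ := Nat.one_le_floor_iff y |>.2 hy
    have hlog : 0 ≤ Real.log y := Real.log_nonneg hy
    have step1 : ∑ n ∈ Icc 1 ⌊y⌋₊, (piltz (m+2) n : ℝ)
        = ∑ a ∈ Icc 1 ⌊y⌋₊, ∑ b ∈ Icc 1 (⌊y⌋₊ / a), (piltz (m+1) b : ℝ) := by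
      rw [← sum_divisors_swap]
      refine Finset.sum_congr rfl fun n _ => ?_
      rw [piltz_succ_eq_sum (m+1) n]
      push_cast
      ring
    rw [step1]
    have inner : ∀ a ∈ Icc 1 ⌊y⌋₊,
        ∑ b ∈ Icc 1 (⌊y⌋₊ / a), (piltz (m+1) b : ℝ) ≤ (y / a) * (1 + Real.log y) ^ m := by
      intro a ha
      simp only [Finset.mem_Icc] at ha
      have ha0 : (0:ℝ) < a := by exact_mod_cast ha.1
      have hya : 1 ≤ y / a := by
        rw [le_div_iff₀ ha0]
        calc (1:ℝ) * a = a := one_mul _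
          _ ≤ ⌊y⌋₊ := by exact_mod_cast ha.2
          _ ≤ y := Nat.floor_le hy0.le
      have hfd : ⌊y⌋₊ / a = ⌊y / (a:ℕ)⌋₊ := (Nat.floor_div_natCast y a).symm
      rw [hfd]
      calc ∑ b ∈ Icc 1 ⌊y / (a:ℕ)⌋₊, (piltz (m+1) b : ℝ)
          ≤ (y / a) * (1 + Real.log (y / a)) ^ m := ih (y / a) hya
        _ ≤ (y / a) * (1 + Real.log y) ^ m := by
            apply mul_le_mul_of_nonneg_left _ (by positivity)
            apply pow_le_pow_left₀ (by linarith [Real.log_nonneg hya])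
            have ha1 : (1:ℝ) ≤ a := by exact_mod_cast ha.1
            have : y / a ≤ y := by
              rw [div_le_iff₀ ha0]
              nlinarith [mul_nonneg hy0.le (sub_nonneg.2 ha1)]
            linarith [Real.log_le_log (by linarith) this]
    calc ∑ a ∈ Icc 1 ⌊y⌋₊, ∑ b ∈ Icc 1 (⌊y⌋₊ / a), (piltz (m+1) b : ℝ)
        ≤ ∑ a ∈ Icc 1 ⌊y⌋₊, (y / a) * (1 + Real.log y) ^ m := Finset.sum_le_sum inner
      _ = ∑ a ∈ Icc 1 ⌊y⌋₊, (1 + Real.log y) ^ m * y * (a:ℝ)⁻¹ :=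
          Finset.sum_congr rfl fun a _ => by ring
      _ = (1 + Real.log y) ^ m * y * ∑ a ∈ Icc 1 ⌊y⌋₊, (a:ℝ)⁻¹ := by
          rw [← Finset.mul_sum]
      _ ≤ (1 + Real.log y) ^ m * y * (1 + Real.log y) := by
          apply mul_le_mul_of_nonneg_left _ (by positivity)
          calc ∑ a ∈ Icc 1 ⌊y⌋₊, (a:ℝ)⁻¹ ≤ 1 + Real.log ⌊y⌋₊ := harmonic_bound ⌊y⌋₊
            _ ≤ 1 + Real.log y := by
                have h1 : (0:ℝ) < ⌊y⌋₊ := by exact_mod_cast hfl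
                linarith [Real.log_le_log h1 (Nat.floor_le hy0.le)]
      _ = y * (1 + Real.log y) ^ (m+1) := by ring

lemma exists_B (m : ℕ) : ∃ B : ℝ, 1 ≤ B ∧ ∀ e : ℕ,
    ((e:ℝ)+1)^m ≤ B * (2:ℝ) ^ ((e:ℝ)/16) := by
  set r : ℝ := (2:ℝ) ^ ((1:ℝ)/16) with hr
  have hr0 : 0 < r := Real.rpow_pos_of_pos (by norm_num) _
  have hr1 : 1 < r := Real.one_lt_rpow_iff_of_pos (by norm_num) |>.2 (Or.inl ⟨by norm_num, by norm_num⟩)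
  have h0 : Filter.Tendsto (fun n : ℕ => (n:ℝ)^m / r^n) Filter.atTop (nhds 0) :=
    tendsto_pow_const_div_const_pow_of_one_lt m hr1
  have h1 : Filter.Tendsto (fun e : ℕ => ((e:ℝ)+1)^m / r^e) Filter.atTop (nhds 0) := by
    have h2 := (h0.comp (Filter.tendsto_add_atTop_nat 1)).const_mul r
    rw [mul_zero] at h2
    refine h2.congr fun e => ?_
    show r * ((((e+1:ℕ)):ℝ)^m / r^(e+1)) = ((e:ℝ)+1)^m / r^e
    push_cast
    rw [pow_succ]
    field_simp
  have hbdd : BddAbove (Set.range fun e : ℕ => ((e:ℝ)+1)^m / r^e) := h1.bddAbove_range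
  set B0 : ℝ := sSup (Set.range fun e : ℕ => ((e:ℝ)+1)^m / r^e) with hB0
  refine ⟨max B0 1, le_max_right _ _, fun e => ?_⟩
  have hle : ((e:ℝ)+1)^m / r^e ≤ B0 := le_csSup hbdd ⟨e, rfl⟩
  have hre : r ^ e = (2:ℝ) ^ ((e:ℝ)/16) := by
    rw [hr, ← Real.rpow_natCast ((2:ℝ) ^ ((1:ℝ)/16)) e, ← Real.rpow_mul (by norm_num)]
    ring_nf
  rw [← hre]
  calc ((e:ℝ)+1)^m = (((e:ℝ)+1)^m / r^e) * r^e := by field_simp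
    _ ≤ B0 * r^e := by
        apply mul_le_mul_of_nonneg_right hle (by positivity)
    _ ≤ max B0 1 * r^e := by
        apply mul_le_mul_of_nonneg_right (le_max_left _ _) (by positivity)

lemma exists_BP (m : ℕ) : ∃ (B : ℝ) (P : ℕ), 1 ≤ B ∧ ∀ p e : ℕ, 2 ≤ p → 3 ≤ e →
    ((e:ℝ)+1)^m ≤ (if p < P then B else 1) * (((p:ℝ) ^ e) ^ ((1:ℝ)/8)) := by
  obtain ⟨B, hB1, hB⟩ := exists_B m
  refine ⟨B, ⌈B^(16:ℕ)⌉₊ + 1, hB1, fun p e hp he => ?_⟩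
  have hp0 : (0:ℝ) < p := by positivity
  have hp1 : (1:ℝ) ≤ p := by exact_mod_cast hp.trans' one_le_two
  have hp2 : (2:ℝ) ≤ p := by exact_mod_cast hp
  have hkey : ((p:ℝ) ^ e) ^ ((1:ℝ)/8) = (p:ℝ) ^ ((e:ℝ)/16) * (p:ℝ) ^ ((e:ℝ)/16) := by
    rw [← Real.rpow_natCast (p:ℝ) e, ← Real.rpow_mul hp0.le, ← Real.rpow_add hp0]
    ring_nf
  have h2p : (2:ℝ) ^ ((e:ℝ)/16) ≤ (p:ℝ) ^ ((e:ℝ)/16) :=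
    Real.rpow_le_rpow (by norm_num) hp2 (by positivity)
  rw [hkey]
  by_cases hcase : p < ⌈B^(16:ℕ)⌉₊ + 1
  · rw [if_pos hcase]
    calc ((e:ℝ)+1)^m ≤ B * (2:ℝ) ^ ((e:ℝ)/16) := hB e
      _ ≤ B * (p:ℝ) ^ ((e:ℝ)/16) := by
          apply mul_le_mul_of_nonneg_left h2p (by linarith)
      _ ≤ B * (p:ℝ) ^ ((e:ℝ)/16) * (p:ℝ) ^ ((e:ℝ)/16) := by
          have h1 : (1:ℝ) ≤ (p:ℝ) ^ ((e:ℝ)/16) := Real.one_le_rpow hp1 (by positivity)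
          exact le_mul_of_one_le_right (by positivity) h1
      _ = B * ((p:ℝ) ^ ((e:ℝ)/16) * (p:ℝ) ^ ((e:ℝ)/16)) := by ring
  · rw [if_neg hcase, one_mul]
    push_neg at hcase
    have hPB : B^(16:ℕ) ≤ (p:ℝ) := by
      calc B^(16:ℕ) ≤ (⌈B^(16:ℕ)⌉₊ : ℝ) := Nat.le_ceil _
        _ ≤ (p:ℝ) := by exact_mod_cast by omega
    have hBp : B ≤ (p:ℝ) ^ ((e:ℝ)/16) := by
      calc B = (B^(16:ℕ)) ^ ((1:ℝ)/16) := by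
            rw [← Real.rpow_natCast B 16, ← Real.rpow_mul (by linarith)]
            norm_num
        _ ≤ (p:ℝ) ^ ((1:ℝ)/16) := Real.rpow_le_rpow (by positivity) hPB (by norm_num)
        _ ≤ (p:ℝ) ^ ((e:ℝ)/16) := by
            apply Real.rpow_le_rpow_of_exponent_le hp1
            have : (3:ℝ) ≤ (e:ℝ) := by exact_mod_cast he
            linarith
    calc ((e:ℝ)+1)^m ≤ B * (2:ℝ) ^ ((e:ℝ)/16) := hB e
      _ ≤ (p:ℝ) ^ ((e:ℝ)/16) * (p:ℝ) ^ ((e:ℝ)/16) := by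
          apply mul_le_mul hBp h2p (by positivity) (by positivity)

lemma key_decomp (i : ℕ) (B : ℝ) (hB : 1 ≤ B) (P : ℕ)
    (hBP : ∀ p e : ℕ, 2 ≤ p → 3 ≤ e →
      ((e:ℝ)+1)^i ≤ (if p < P then B else 1) * (((p:ℝ) ^ e) ^ ((1:ℝ)/8)))
    (n : ℕ) (hn : n ≠ 0) (h2 : ∀ p ∈ n.primeFactors, p ^ 2 ∣ n) :
    ∃ s a b c : ℕ, 0 < s ∧ 0 < a ∧ 0 < b ∧ 0 < c ∧ s^2 * (a^3*b^4*c^5) = n ∧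
      (piltz (i+1) n : ℝ) / ((i:ℝ)+1) ^ n.primeFactors.card ≤
        (piltz (i+1) s : ℝ) * B ^ P * ((a^3*b^4*c^5 : ℕ):ℝ) ^ ((1:ℝ)/8) := by
  classical
  set j := i + 1 with hjdef
  set E := n.factorization with hE
  have hprime : ∀ p ∈ n.primeFactors, p.Prime := fun p hp => Nat.prime_of_mem_primeFactors hp
  have hge2 : ∀ p ∈ n.primeFactors, 2 ≤ E p := fun p hp =>
    (Nat.Prime.pow_dvd_iff_le_factorization (hprime p hp) hn).1 (h2 p hp)
  set S := n.primeFactors.filter (fun p => E p = 2) with hS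
  set W := n.primeFactors.filter (fun p => 3 ≤ E p) with hW
  have hdisj : Disjoint S W := by
    rw [Finset.disjoint_left]
    intro p hp hq
    have h1 := (Finset.mem_filter.1 hp).2
    have h2' := (Finset.mem_filter.1 hq).2
    omega
  have hunion : S ∪ W = n.primeFactors := by
    ext p
    simp only [hS, hW, Finset.mem_union, Finset.mem_filter]
    constructor
    · rintro (⟨h, _⟩ | ⟨h, _⟩) <;> exact h
    · intro h
      have h2'' := hge2 p h
      by_cases hcs : E p = 2
      · exact Or.inl ⟨h, hcs⟩
      · exact Or.inr ⟨h, by omega⟩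
  have hSprime : ∀ p ∈ S, p.Prime := fun p hp => hprime p (Finset.mem_filter.1 hp).1
  have hWprime : ∀ p ∈ W, p.Prime := fun p hp => hprime p (Finset.mem_filter.1 hp).1
  set α : ℕ → ℕ := fun e => if e % 3 = 0 then e/3 else if e % 3 = 1 then (e-4)/3 else (e-5)/3
    with hα
  set s := ∏ p ∈ S, p with hs
  set a := ∏ p ∈ W, p ^ (α (E p)) with ha
  set b := ∏ p ∈ W, p ^ (if E p % 3 = 1 then 1 else 0) with hb
  set c := ∏ p ∈ W, p ^ (if E p % 3 = 2 then 1 else 0) with hc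
  set w := ∏ p ∈ W, p ^ (E p) with hw
  have hspos : 0 < s := Finset.prod_pos fun p hp => (hSprime p hp).pos
  have hapos : 0 < a := Finset.prod_pos fun p hp => pow_pos (hWprime p hp).pos _
  have hbpos : 0 < b := Finset.prod_pos fun p hp => pow_pos (hWprime p hp).pos _
  have hcpos : 0 < c := Finset.prod_pos fun p hp => pow_pos (hWprime p hp).pos _
  have habc : a^3 * b^4 * c^5 = w := by
    rw [ha, hb, hc, hw, ← Finset.prod_pow, ← Finset.prod_pow, ← Finset.prod_pow,
      ← Finset.prod_mul_distrib, ← Finset.prod_mul_distrib]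
    apply Finset.prod_congr rfl
    intro p hp
    have he3 : 3 ≤ E p := (Finset.mem_filter.1 hp).2
    rw [← pow_mul, ← pow_mul, ← pow_mul, ← pow_add, ← pow_add]
    congr 1
    simp only [hα]
    split_ifs <;> omega
  have hnprod : ∏ p ∈ n.primeFactors, p ^ E p = n := by
    conv_rhs => rw [← Nat.factorization_prod_pow_eq_self hn]
    rfl
  have hsw : s ^ 2 * w = n := by
    have e1 : s ^ 2 = ∏ p ∈ S, p ^ E p := by
      rw [hs, ← Finset.prod_pow]
      exact Finset.prod_congr rfl fun p hp => by rw [(Finset.mem_filter.1 hp).2]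
    rw [e1, hw, ← Finset.prod_union hdisj, hunion, hnprod]
  have hfact : (piltz j n : ℝ) = ∏ p ∈ n.primeFactors, (piltz j (p ^ E p) : ℝ) := by
    have h := ArithmeticFunction.IsMultiplicative.multiplicative_factorization _ (piltz_mult j) hn
    have h2' : piltz j n = ∏ p ∈ n.primeFactors, piltz j (p ^ E p) := h
    rw [h2']
    push_cast
    rfl
  have hLHS : (piltz j n : ℝ) / ((i:ℝ)+1) ^ n.primeFactors.card
      = ∏ p ∈ n.primeFactors, ((piltz j (p ^ E p) : ℝ) / ((i:ℝ)+1)) := by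
    rw [hfact, Finset.prod_div_distrib, Finset.prod_const]
  have hSbound : ∏ p ∈ S, ((piltz j (p ^ E p) : ℝ) / ((i:ℝ)+1)) ≤ (piltz j s : ℝ) := by
    have hs' : (piltz j s : ℝ) = ∏ p ∈ S, (piltz j p : ℝ) := by
      have h := ArithmeticFunction.IsMultiplicative.map_prod_of_prime (piltz_mult j) S hSprime
      have h2' : piltz j s = ∏ p ∈ S, piltz j p := h
      rw [h2']
      push_cast
      rfl
    rw [hs']
    apply Finset.prod_le_prod
    · intro p hp; positivity
    · intro p hp
      have hpp := hSprime p hp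
      have he2 : E p = 2 := (Finset.mem_filter.1 hp).2
      have hsqR : 2 * (piltz j (p^2) : ℝ) = ((i:ℝ)+1) * ((i:ℝ)+2) := by
        exact_mod_cast piltz_prime_sq i p hpp
      have hpr : (piltz j p : ℝ) = (i:ℝ)+1 := by exact_mod_cast piltz_prime i p hpp
      rw [he2, hpr, div_le_iff₀ (by positivity)]
      have hi0 : (0:ℝ) ≤ (i:ℝ) := by positivity
      nlinarith [hsqR]
  have hWbound : ∏ p ∈ W, ((piltz j (p ^ E p) : ℝ) / ((i:ℝ)+1))
      ≤ B ^ P * ((w:ℕ):ℝ) ^ ((1:ℝ)/8) := by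
    have hc1 : ∏ p ∈ W, (if p < P then B else 1) ≤ B ^ P := by
      have e1 : ∏ p ∈ W, (if p < P then B else 1)
          = (∏ p ∈ W.filter (fun p => p < P), (if p < P then B else 1)) *
            ∏ p ∈ W.filter (fun p => ¬ p < P), (if p < P then B else 1) :=
        (Finset.prod_filter_mul_prod_filter_not W _ _).symm
      have e2 : ∏ p ∈ W.filter (fun p => p < P), (if p < P then B else 1)
          = B ^ (W.filter (fun p => p < P)).card := by
        rw [Finset.prod_congr rfl (fun p hp => if_pos (Finset.mem_filter.1 hp).2),
          Finset.prod_const]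
      have e3 : ∏ p ∈ W.filter (fun p => ¬ p < P), (if p < P then B else 1) = 1 := by
        rw [Finset.prod_congr rfl (fun p hp => if_neg (Finset.mem_filter.1 hp).2),
          Finset.prod_const_one]
      rw [e1, e2, e3, mul_one]
      apply pow_le_pow_right₀ hB
      calc (W.filter (fun p => p < P)).card ≤ (Finset.range P).card :=
            Finset.card_le_card (fun p hp => Finset.mem_range.2 (Finset.mem_filter.1 hp).2)
        _ = P := Finset.card_range P
    have hc2 : ∏ p ∈ W, (((p:ℝ) ^ E p) ^ ((1:ℝ)/8)) = ((w:ℕ):ℝ) ^ ((1:ℝ)/8) := by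
      rw [Real.finset_prod_rpow W _ (fun p hp => by positivity) _]
      congr 1
      rw [hw]
      push_cast
      rfl
    calc ∏ p ∈ W, ((piltz j (p ^ E p) : ℝ) / ((i:ℝ)+1))
        ≤ ∏ p ∈ W, ((if p < P then B else 1) * (((p:ℝ) ^ E p) ^ ((1:ℝ)/8))) := by
          apply Finset.prod_le_prod
          · intro p hp; positivity
          · intro p hp
            have hpp := hWprime p hp
            have he3 : 3 ≤ E p := (Finset.mem_filter.1 hp).2
            have h1 : (piltz j (p ^ E p) : ℝ) / ((i:ℝ)+1) ≤ (piltz j (p ^ E p) : ℝ) :=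
              div_le_self (by positivity) (by simp)
            have h2' : (piltz j (p ^ E p) : ℝ) ≤ ((E p : ℝ)+1)^i := by
              exact_mod_cast piltz_prime_pow_le i (E p) p hpp
            exact h1.trans (h2'.trans (hBP p (E p) hpp.two_le he3))
      _ = (∏ p ∈ W, (if p < P then B else 1)) * ∏ p ∈ W, (((p:ℝ) ^ E p) ^ ((1:ℝ)/8)) :=
          Finset.prod_mul_distrib
      _ ≤ B ^ P * ((w:ℕ):ℝ) ^ ((1:ℝ)/8) := by
          rw [hc2]
          apply mul_le_mul_of_nonneg_right hc1 (Real.rpow_nonneg (by positivity) _)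
  refine ⟨s, a, b, c, hspos, hapos, hbpos, hcpos, by rw [habc]; exact hsw, ?_⟩
  have habc' : ((a^3*b^4*c^5 : ℕ):ℝ) = ((w:ℕ):ℝ) := by exact_mod_cast congrArg Nat.cast habc
  rw [habc', hLHS, ← hunion, Finset.prod_union hdisj]
  calc (∏ p ∈ S, ((piltz j (p ^ E p) : ℝ) / ((i:ℝ)+1))) *
        ∏ p ∈ W, ((piltz j (p ^ E p) : ℝ) / ((i:ℝ)+1))
      ≤ (piltz j s : ℝ) * (B ^ P * ((w:ℕ):ℝ) ^ ((1:ℝ)/8)) := by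
        apply mul_le_mul hSbound hWbound (Finset.prod_nonneg fun p hp => by positivity)
          (by positivity)
    _ = (piltz j s : ℝ) * B ^ P * ((w:ℕ):ℝ) ^ ((1:ℝ)/8) := by ring

lemma sum_le_sum_of_exists {α β : Type*} [DecidableEq α] [DecidableEq β]
    (A : Finset α) (Bf : Finset β)
    (f : α → ℝ) (g : β → ℝ) (hg : ∀ t ∈ Bf, 0 ≤ g t) (R : β → α)
    (h : ∀ n ∈ A, ∃ t, t ∈ Bf ∧ f n ≤ g t ∧ R t = n) [Inhabited β] :
    ∑ n ∈ A, f n ≤ ∑ t ∈ Bf, g t := by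
  choose! t ht hfg hR using h
  calc ∑ n ∈ A, f n ≤ ∑ n ∈ A, g (t n) := Finset.sum_le_sum hfg
    _ = ∑ u ∈ A.image t, g u := by
        rw [Finset.sum_image]
        intro n₁ h₁ n₂ h₂ heq
        rw [← hR n₁ h₁, ← hR n₂ h₂, heq]
    _ ≤ ∑ u ∈ Bf, g u := Finset.sum_le_sum_of_subset_of_nonneg
        (Finset.image_subset_iff.2 ht) (fun u hu _ => hg u hu)

lemma master (i : ℕ) : ∃ C : ℝ, 0 < C ∧ ∀ x : ℝ, 2 ≤ x →
    ∑ n ∈ (Icc 1 ⌊x⌋₊).filter TwoFull,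
        (piltz (i+1) n : ℝ) / ((i:ℝ)+1) ^ n.primeFactors.card ≤
      C * Real.sqrt x * (1 + Real.log x) ^ i := by
  classical
  obtain ⟨B, P, hB, hBP⟩ := exists_BP i
  have hsumm : Summable (fun n : ℕ => (n:ℝ) ^ (-(9:ℝ)/8)) :=
    Real.summable_nat_rpow.2 (by norm_num)
  set C0 := ∑' n : ℕ, (n:ℝ) ^ (-(9:ℝ)/8) with hC0def
  have hC0 : 0 ≤ C0 := tsum_nonneg fun n => Real.rpow_nonneg (Nat.cast_nonneg n) _
  have hBP0 : (0:ℝ) < B ^ P := by positivity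
  refine ⟨B ^ P * C0 ^ 3 + 1, by positivity, fun x hx => ?_⟩
  set N := ⌊x⌋₊ with hN
  have hx1 : (1:ℝ) ≤ x := by linarith
  have hx0 : (0:ℝ) < x := by linarith
  have hlogx : (0:ℝ) ≤ Real.log x := Real.log_nonneg hx1
  set g : (ℕ×ℕ)×(ℕ×ℕ) → ℝ := fun t =>
    (piltz (i+1) t.1.1 : ℝ) * B ^ P * ((t.1.2^3*t.2.1^4*t.2.2^5 : ℕ):ℝ) ^ ((1:ℝ)/8) with hg
  set Q : Finset ((ℕ×ℕ)×(ℕ×ℕ)) := (((Icc 1 N) ×ˢ (Icc 1 N)) ×ˢ ((Icc 1 N) ×ˢ (Icc 1 N))).filter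
      (fun t => t.1.1^2 * (t.1.2^3 * t.2.1^4 * t.2.2^5) ≤ N) with hQ
  have stepA : ∑ n ∈ (Icc 1 N).filter TwoFull,
      (piltz (i+1) n : ℝ) / ((i:ℝ)+1) ^ n.primeFactors.card ≤ ∑ t ∈ Q, g t := by
    apply sum_le_sum_of_exists _ _ _ _ (fun t _ => by positivity)
      (fun t => t.1.1^2 * (t.1.2^3 * t.2.1^4 * t.2.2^5))
    intro n hn
    rw [Finset.mem_filter, Finset.mem_Icc] at hn
    obtain ⟨⟨hn1, hnN⟩, h2full⟩ := hn
    obtain ⟨s, a, b, c, hs, ha, hb, hc, hprod, hineq⟩ :=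
      key_decomp i B hB P hBP n (by omega) (fun p hp => h2full p hp)
    refine ⟨((s,a),(b,c)), ?_, hineq, hprod⟩
    have hn0 : 0 < n := by omega
    have hsn : s ≤ n := Nat.le_of_dvd hn0 (by
      rw [← hprod]; exact (dvd_pow_self s (by norm_num)).mul_right _)
    have han : a ≤ n := Nat.le_of_dvd hn0 (by
      rw [← hprod]; exact (((dvd_pow_self a (by norm_num)).mul_right _).mul_right _).mul_left _)
    have hbn : b ≤ n := Nat.le_of_dvd hn0 (by
      rw [← hprod]; exact (((dvd_pow_self b (by norm_num)).mul_left _).mul_right _).mul_left _)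
    have hcn : c ≤ n := Nat.le_of_dvd hn0 (by
      rw [← hprod]; exact ((dvd_pow_self c (by norm_num)).mul_left _).mul_left _)
    rw [hQ, Finset.mem_filter]
    constructor
    · simp only [Finset.mem_product, Finset.mem_Icc]
      exact ⟨⟨⟨hs, by omega⟩, ⟨ha, by omega⟩⟩, ⟨hb, by omega⟩, ⟨hc, by omega⟩⟩
    · rw [hprod]; exact hnN
  set F : ℕ×(ℕ×ℕ) → ℕ := fun u => u.1^3 * u.2.1^4 * u.2.2^5 with hF
  set cube := (Icc 1 N) ×ˢ ((Icc 1 N) ×ˢ (Icc 1 N)) with hcube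
  set T : Finset ((_ : ℕ×(ℕ×ℕ)) × ℕ) :=
    cube.sigma (fun u => Icc 1 ⌊Real.sqrt (x / ((F u : ℕ):ℝ))⌋₊) with hT
  set g' : ((_ : ℕ×(ℕ×ℕ)) × ℕ) → ℝ := fun z =>
    (piltz (i+1) z.2 : ℝ) * B ^ P * ((F z.1 : ℕ):ℝ) ^ ((1:ℝ)/8) with hg'
  have stepB : ∑ t ∈ Q, g t ≤ ∑ z ∈ T, g' z := by
    apply sum_le_sum_of_exists _ _ _ _ (fun z _ => by positivity)
      (fun z => ((z.2, z.1.1), (z.1.2.1, z.1.2.2)))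
    rintro ⟨⟨s, a⟩, b, c⟩ ht
    rw [hQ, Finset.mem_filter] at ht
    obtain ⟨hmem, hle⟩ := ht
    simp only [Finset.mem_product, Finset.mem_Icc] at hmem
    obtain ⟨⟨⟨hs1, hsN⟩, ha1, haN⟩, ⟨hb1, hbN⟩, hc1, hcN⟩ := hmem
    refine ⟨⟨(a, (b, c)), s⟩, ?_, le_of_eq rfl, rfl⟩
    rw [hT, Finset.mem_sigma]
    constructor
    · simp only [hcube, Finset.mem_product, Finset.mem_Icc]
      exact ⟨⟨ha1, haN⟩, ⟨hb1, hbN⟩, hc1, hcN⟩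
    · rw [Finset.mem_Icc]
      refine ⟨hs1, Nat.le_floor ?_⟩
      have hFpos : (0:ℝ) < ((F (a,(b,c)) : ℕ):ℝ) := by
        simp only [hF]; positivity
      rw [Real.le_sqrt (by positivity) (by positivity), le_div_iff₀ hFpos]
      have h1 : ((s^2 * (a^3*b^4*c^5) : ℕ):ℝ) ≤ (N:ℝ) := by exact_mod_cast hle
      have h2 : (N:ℝ) ≤ x := Nat.floor_le hx0.le
      calc (s:ℝ)^2 * ((F (a,(b,c)) : ℕ):ℝ) = ((s^2 * (a^3*b^4*c^5) : ℕ):ℝ) := by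
            simp only [hF]; push_cast; ring
        _ ≤ x := h1.trans h2
  have hinner : ∀ u ∈ cube, ∑ s ∈ Icc 1 ⌊Real.sqrt (x / ((F u : ℕ):ℝ))⌋₊,
      (piltz (i+1) s : ℝ) ≤ Real.sqrt x * ((F u : ℕ):ℝ) ^ (-(1:ℝ)/2) * (1 + Real.log x) ^ i := by
    intro u hu
    have hu1 : 1 ≤ F u := by
      simp only [hcube, Finset.mem_product, Finset.mem_Icc] at hu
      have h1 := hu.1.1; have h2 := hu.2.1.1; have h3 := hu.2.2.1
      simp only [hF]
      exact Nat.mul_pos (Nat.mul_pos (pow_pos (by omega) 3) (pow_pos (by omega) 4))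
        (pow_pos (by omega) 5)
    have hFpos : (0:ℝ) < ((F u : ℕ):ℝ) := by exact_mod_cast hu1
    have hF1 : (1:ℝ) ≤ ((F u : ℕ):ℝ) := by exact_mod_cast hu1
    have hRHS0 : 0 ≤ Real.sqrt x * ((F u : ℕ):ℝ) ^ (-(1:ℝ)/2) * (1 + Real.log x) ^ i := by
      apply mul_nonneg (mul_nonneg (Real.sqrt_nonneg x) (Real.rpow_nonneg hFpos.le _))
      positivity
    set y := Real.sqrt (x / ((F u : ℕ):ℝ)) with hy
    by_cases hy1 : 1 ≤ y
    · have hyx : y ≤ x := by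
        calc y ≤ Real.sqrt x := Real.sqrt_le_sqrt (div_le_self hx0.le hF1)
          _ ≤ Real.sqrt (x^2) := Real.sqrt_le_sqrt (by nlinarith)
          _ = x := Real.sqrt_sq hx0.le
      have hyeq : y = Real.sqrt x * ((F u : ℕ):ℝ) ^ (-(1:ℝ)/2) := by
        rw [hy, Real.sqrt_div hx0.le, Real.sqrt_eq_rpow ((F u : ℕ):ℝ), div_eq_mul_inv,
          ← Real.rpow_neg hFpos.le]
        norm_num
      calc ∑ s ∈ Icc 1 ⌊y⌋₊, (piltz (i+1) s : ℝ) ≤ y * (1 + Real.log y) ^ i :=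
            piltz_mean_value i y hy1
        _ ≤ y * (1 + Real.log x) ^ i := by
            apply mul_le_mul_of_nonneg_left _ (Real.sqrt_nonneg _)
            apply pow_le_pow_left₀ (by linarith [Real.log_nonneg hy1])
            have : Real.log y ≤ Real.log x := Real.log_le_log (by linarith) hyx
            linarith
        _ = Real.sqrt x * ((F u : ℕ):ℝ) ^ (-(1:ℝ)/2) * (1 + Real.log x) ^ i := by
            rw [hyeq]
    · push_neg at hy1
      rw [Nat.floor_eq_zero.2 hy1, Finset.Icc_eq_empty (by omega), Finset.sum_empty]
      exact hRHS0
  have stepC : ∑ z ∈ T, g' z ≤ B ^ P * Real.sqrt x * (1 + Real.log x) ^ i * C0 ^ 3 := by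
    have hsplit : ∑ z ∈ T, g' z = ∑ u ∈ cube, B ^ P * ((F u : ℕ):ℝ) ^ ((1:ℝ)/8) *
        ∑ s ∈ Icc 1 ⌊Real.sqrt (x / ((F u : ℕ):ℝ))⌋₊, (piltz (i+1) s : ℝ) := by
      rw [hT, Finset.sum_sigma]
      apply Finset.sum_congr rfl
      intro u hu
      rw [Finset.mul_sum]
      apply Finset.sum_congr rfl
      intro s hs
      simp only [hg']
      ring
    rw [hsplit]
    have hterm : ∀ u ∈ cube, B ^ P * ((F u : ℕ):ℝ) ^ ((1:ℝ)/8) *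
        ∑ s ∈ Icc 1 ⌊Real.sqrt (x / ((F u : ℕ):ℝ))⌋₊, (piltz (i+1) s : ℝ)
        ≤ B ^ P * Real.sqrt x * (1 + Real.log x) ^ i * ((F u : ℕ):ℝ) ^ (-(3:ℝ)/8) := by
      intro u hu
      have hu1 : 1 ≤ F u := by
        simp only [hcube, Finset.mem_product, Finset.mem_Icc] at hu
        have h1 := hu.1.1; have h2 := hu.2.1.1; have h3 := hu.2.2.1
        simp only [hF]
        exact Nat.mul_pos (Nat.mul_pos (pow_pos (by omega) 3) (pow_pos (by omega) 4))
          (pow_pos (by omega) 5)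
      have hFpos : (0:ℝ) < ((F u : ℕ):ℝ) := by exact_mod_cast hu1
      calc B ^ P * ((F u : ℕ):ℝ) ^ ((1:ℝ)/8) *
          ∑ s ∈ Icc 1 ⌊Real.sqrt (x / ((F u : ℕ):ℝ))⌋₊, (piltz (i+1) s : ℝ)
          ≤ B ^ P * ((F u : ℕ):ℝ) ^ ((1:ℝ)/8) *
            (Real.sqrt x * ((F u : ℕ):ℝ) ^ (-(1:ℝ)/2) * (1 + Real.log x) ^ i) := by
            apply mul_le_mul_of_nonneg_left (hinner u hu)
            positivity
        _ = B ^ P * Real.sqrt x * (1 + Real.log x) ^ i *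
            (((F u : ℕ):ℝ) ^ ((1:ℝ)/8) * ((F u : ℕ):ℝ) ^ (-(1:ℝ)/2)) := by ring
        _ = B ^ P * Real.sqrt x * (1 + Real.log x) ^ i * ((F u : ℕ):ℝ) ^ (-(3:ℝ)/8) := by
            rw [← Real.rpow_add hFpos]
            norm_num
    calc ∑ u ∈ cube, B ^ P * ((F u : ℕ):ℝ) ^ ((1:ℝ)/8) *
        ∑ s ∈ Icc 1 ⌊Real.sqrt (x / ((F u : ℕ):ℝ))⌋₊, (piltz (i+1) s : ℝ)
        ≤ ∑ u ∈ cube, B ^ P * Real.sqrt x * (1 + Real.log x) ^ i * ((F u : ℕ):ℝ) ^ (-(3:ℝ)/8) :=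
          Finset.sum_le_sum hterm
      _ = B ^ P * Real.sqrt x * (1 + Real.log x) ^ i *
          ∑ u ∈ cube, ((F u : ℕ):ℝ) ^ (-(3:ℝ)/8) := by rw [← Finset.mul_sum]
      _ ≤ B ^ P * Real.sqrt x * (1 + Real.log x) ^ i * C0 ^ 3 := by
          apply mul_le_mul_of_nonneg_left _ (by positivity)
          -- split the cube sum
          have hsummand : ∀ u : ℕ×(ℕ×ℕ), ((F u : ℕ):ℝ) ^ (-(3:ℝ)/8) =
              (u.1:ℝ) ^ (-(9:ℝ)/8) * ((u.2.1:ℝ) ^ (-(12:ℝ)/8) * (u.2.2:ℝ) ^ (-(15:ℝ)/8)) := by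
            intro u
            have e0 : ((F u : ℕ):ℝ) = (u.1:ℝ)^(3:ℕ) * ((u.2.1:ℝ)^(4:ℕ) * (u.2.2:ℝ)^(5:ℕ)) := by
              simp only [hF]; push_cast; ring
            rw [e0, Real.mul_rpow (by positivity) (by positivity),
              Real.mul_rpow (by positivity) (by positivity),
              ← Real.rpow_natCast (u.1:ℝ) 3, ← Real.rpow_natCast (u.2.1:ℝ) 4,
              ← Real.rpow_natCast (u.2.2:ℝ) 5,
              ← Real.rpow_mul (by positivity), ← Real.rpow_mul (by positivity),
              ← Real.rpow_mul (by positivity)]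
            norm_num
          have hb1 : ∀ (e : ℝ), e ≤ -(9:ℝ)/8 →
              ∑ m ∈ Icc 1 N, (m:ℝ) ^ e ≤ C0 := by
            intro e he
            calc ∑ m ∈ Icc 1 N, (m:ℝ) ^ e ≤ ∑ m ∈ Icc 1 N, (m:ℝ) ^ (-(9:ℝ)/8) := by
                  apply Finset.sum_le_sum
                  intro m hm
                  have hm1 : (1:ℝ) ≤ (m:ℝ) := by
                    exact_mod_cast (Finset.mem_Icc.1 hm).1
                  exact Real.rpow_le_rpow_of_exponent_le hm1 he
              _ ≤ C0 := by
                  apply Summable.sum_le_tsum _ (fun m _ => Real.rpow_nonneg (Nat.cast_nonneg m) _)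
                    hsumm
          have hnn : ∀ (e : ℝ), 0 ≤ ∑ m ∈ Icc 1 N, (m:ℝ) ^ e := fun e =>
            Finset.sum_nonneg fun m _ => Real.rpow_nonneg (Nat.cast_nonneg m) _
          calc ∑ u ∈ cube, ((F u : ℕ):ℝ) ^ (-(3:ℝ)/8)
              = ∑ a ∈ Icc 1 N, ∑ p ∈ (Icc 1 N) ×ˢ (Icc 1 N),
                  ((a:ℝ) ^ (-(9:ℝ)/8) * ((p.1:ℝ) ^ (-(12:ℝ)/8) * (p.2:ℝ) ^ (-(15:ℝ)/8))) := by
                rw [hcube, Finset.sum_product]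
                exact Finset.sum_congr rfl fun a _ => Finset.sum_congr rfl fun p _ =>
                  hsummand (a, p)
            _ = (∑ a ∈ Icc 1 N, (a:ℝ) ^ (-(9:ℝ)/8)) *
                ∑ p ∈ (Icc 1 N) ×ˢ (Icc 1 N), ((p.1:ℝ) ^ (-(12:ℝ)/8) * (p.2:ℝ) ^ (-(15:ℝ)/8)) := by
                rw [Finset.sum_mul]
                exact Finset.sum_congr rfl fun a _ => by rw [← Finset.mul_sum]
            _ = (∑ a ∈ Icc 1 N, (a:ℝ) ^ (-(9:ℝ)/8)) *
                ((∑ b ∈ Icc 1 N, (b:ℝ) ^ (-(12:ℝ)/8)) * (∑ c ∈ Icc 1 N, (c:ℝ) ^ (-(15:ℝ)/8))) := by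
                congr 1
                rw [Finset.sum_product]
                rw [Finset.sum_mul]
                exact Finset.sum_congr rfl fun b _ => by simp [← Finset.mul_sum]
            _ ≤ C0 * (C0 * C0) := by
                apply mul_le_mul (hb1 _ (by norm_num)) _ _ hC0
                · apply mul_le_mul (hb1 _ (by norm_num)) (hb1 _ (by norm_num)) (hnn _) hC0
                · exact mul_nonneg (hnn _) (hnn _)
            _ = C0 ^ 3 := by ring
  calc ∑ n ∈ (Icc 1 N).filter TwoFull,
      (piltz (i+1) n : ℝ) / ((i:ℝ)+1) ^ n.primeFactors.card
      ≤ ∑ t ∈ Q, g t := stepA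
    _ ≤ ∑ z ∈ T, g' z := stepB
    _ ≤ B ^ P * Real.sqrt x * (1 + Real.log x) ^ i * C0 ^ 3 := stepC
    _ ≤ (B ^ P * C0 ^ 3 + 1) * Real.sqrt x * (1 + Real.log x) ^ i := by
        have h1 : 0 ≤ Real.sqrt x * (1 + Real.log x) ^ i := by positivity
        nlinarith [h1]

/-- For `k ≥ 2` there is `C` depending only on `k` such that for every `q ≥ 1`
and all `x ≥ 2`, `∑_{n ≤ x, (n,q)=1} |g_k(n)| ≤ C·x^{1/2}·(log x)^{k-2}`. -/
theorem stmt_6 (k : ℕ) (hk : 2 ≤ k) :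
    ∃ C : ℝ, 0 < C ∧ ∀ q : ℕ, 1 ≤ q → ∀ x : ℝ, 2 ≤ x →
      ∑ n ∈ (Icc 1 ⌊x⌋₊).filter (fun n => n.gcd q = 1), |gk k n| ≤
        C * x ^ (1 / 2 : ℝ) * Real.log x ^ (k - 2) := by
  obtain ⟨i, rfl⟩ : ∃ i, k = i + 2 := ⟨k - 2, by omega⟩
  obtain ⟨C, hC, hmaster⟩ := master i
  have hlog2 : (0:ℝ) < Real.log 2 := Real.log_pos (by norm_num)
  refine ⟨C * (1 + 1/Real.log 2) ^ i, by positivity, fun q hq x hx => ?_⟩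
  have hx1 : (1:ℝ) ≤ x := by linarith
  have hx0 : (0:ℝ) < x := by linarith
  have hlogx : Real.log 2 ≤ Real.log x := Real.log_le_log (by norm_num) hx
  have hlogx0 : 0 ≤ Real.log x := by linarith
  have hDk : ∀ n : ℕ, Dk (i+2-1) n = (piltz (i+1) n : ℝ) / ((i:ℝ)+1) ^ n.primeFactors.card := by
    intro n
    have he : (i+2-1 : ℕ) = i+1 := by omega
    rw [he]
    unfold Dk
    norm_num
  have hpoint : ∀ n : ℕ, |gk (i+2) n| ≤
      (if TwoFull n then (piltz (i+1) n : ℝ) / ((i:ℝ)+1) ^ n.primeFactors.card else 0) := by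
    intro n
    by_cases h : TwoFull n
    · rw [if_pos h]
      have hgk : gk (i+2) n = (((i:ℝ)+1)/((i:ℝ)+2)) *
          ((piltz (i+1) n : ℝ) / ((i:ℝ)+1) ^ n.primeFactors.card) := by
        unfold gk s2
        rw [if_pos h, hDk n]
        push_cast
        ring
      rw [hgk, abs_of_nonneg (by positivity)]
      have hfrac : ((i:ℝ)+1)/((i:ℝ)+2) ≤ 1 := by
        rw [div_le_one (by positivity)]
        linarith
      calc (((i:ℝ)+1)/((i:ℝ)+2)) * ((piltz (i+1) n : ℝ) / ((i:ℝ)+1) ^ n.primeFactors.card)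
          ≤ 1 * ((piltz (i+1) n : ℝ) / ((i:ℝ)+1) ^ n.primeFactors.card) := by
            apply mul_le_mul_of_nonneg_right hfrac (by positivity)
        _ = (piltz (i+1) n : ℝ) / ((i:ℝ)+1) ^ n.primeFactors.card := one_mul _
    · rw [if_neg h]
      unfold gk s2
      rw [if_neg h]
      simp
  calc ∑ n ∈ (Icc 1 ⌊x⌋₊).filter (fun n => n.gcd q = 1), |gk (i+2) n|
      ≤ ∑ n ∈ (Icc 1 ⌊x⌋₊).filter (fun n => n.gcd q = 1),
          (if TwoFull n then (piltz (i+1) n : ℝ) / ((i:ℝ)+1) ^ n.primeFactors.card else 0) :=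
        Finset.sum_le_sum fun n _ => hpoint n
    _ ≤ ∑ n ∈ Icc 1 ⌊x⌋₊,
          (if TwoFull n then (piltz (i+1) n : ℝ) / ((i:ℝ)+1) ^ n.primeFactors.card else 0) := by
        apply Finset.sum_le_sum_of_subset_of_nonneg (Finset.filter_subset _ _)
        intro n _ _
        by_cases h : TwoFull n
        · rw [if_pos h]; positivity
        · rw [if_neg h]
    _ = ∑ n ∈ (Icc 1 ⌊x⌋₊).filter TwoFull,
          (piltz (i+1) n : ℝ) / ((i:ℝ)+1) ^ n.primeFactors.card := (Finset.sum_filter _ _).symm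
    _ ≤ C * Real.sqrt x * (1 + Real.log x) ^ i := hmaster x hx
    _ ≤ C * (1 + 1/Real.log 2) ^ i * x ^ (1 / 2 : ℝ) * Real.log x ^ (i + 2 - 2) := by
        have he : i + 2 - 2 = i := by omega
        rw [he, ← Real.sqrt_eq_rpow]
        have hkey : (1 + Real.log x) ^ i ≤ (1 + 1/Real.log 2) ^ i * Real.log x ^ i := by
          rw [← mul_pow]
          apply pow_le_pow_left₀ (by linarith)
          have h2 : 1 ≤ Real.log x * (Real.log 2)⁻¹ := by
            rw [← div_eq_mul_inv]
            exact (one_le_div hlog2).2 hlogx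
          have h3 : (1 + 1/Real.log 2) * Real.log x
              = Real.log x + Real.log x * (Real.log 2)⁻¹ := by
            field_simp
          rw [h3]
          linarith
        calc C * Real.sqrt x * (1 + Real.log x) ^ i
            ≤ C * Real.sqrt x * ((1 + 1/Real.log 2) ^ i * Real.log x ^ i) := by
              apply mul_le_mul_of_nonneg_left hkey
              positivity
          _ = C * (1 + 1/Real.log 2) ^ i * Real.sqrt x * Real.log x ^ i := by ring
end
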